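/- The only function g ∈ 𝔉 satisfying the fixed-point equation g(x) = H̄(x)² · exp(∫_{−x}^{∞} g(s) ds) for all x ∈ ℝ is g = H̄. -/

import Mathlib

open MeasureTheory Real Set Filter

/-- The Logistic distribution function `H(x) = 1/(1+e^{-x})`. -/
noncomputable def H (x : ℝ) : ℝ := 1 / (1 + Real.exp (-x))

/-- The tail `H̄ := 1 - H` of the Logistic distribution function. -/
noncomputable def Hbar (x : ℝ) : ℝ := 1 - H x

lemma exp_pos' (x : ℝ) : (0:ℝ) < 1 + Real.exp x := by positivity

lemma H_pos (x : ℝ) : 0 < H x := by unfold H; positivity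

lemma H_le_one (x : ℝ) : H x ≤ 1 := by
  unfold H
  rw [div_le_one (by positivity)]
  nlinarith [Real.exp_pos (-x)]

lemma Hbar_nonneg (x : ℝ) : 0 ≤ Hbar x := by
  unfold Hbar; linarith [H_le_one x]

lemma Hbar_pos (x : ℝ) : 0 < Hbar x := by
  unfold Hbar H
  have h := Real.exp_pos (-x)
  rw [sub_pos, div_lt_one (by positivity)]
  linarith

lemma Hbar_eq (x : ℝ) : Hbar x = 1 / (1 + Real.exp x) := by
  unfold Hbar H
  have h1 := Real.exp_pos x
  have h2 := Real.exp_pos (-x)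
  have h3 : Real.exp (-x) * Real.exp x = 1 := by
    rw [← Real.exp_add]; simp
  field_simp
  nlinarith

lemma Hbar_eq' (x : ℝ) : Hbar x = Real.exp (-x) / (1 + Real.exp (-x)) := by
  unfold Hbar H
  have h2 := Real.exp_pos (-x)
  field_simp
  ring

lemma H_eq' (x : ℝ) : H x = Real.exp x / (1 + Real.exp x) := by
  unfold H
  have h1 := Real.exp_pos x
  have h3 : Real.exp (-x) * Real.exp x = 1 := by rw [← Real.exp_add]; simp
  field_simp
  nlinarith

lemma H_neg (x : ℝ) : H (-x) = Hbar x := by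
  rw [Hbar_eq]; unfold H; rw [neg_neg]

lemma one_sub_H (x : ℝ) : 1 - H x = Hbar x := rfl

lemma hasDerivAt_H (x : ℝ) : HasDerivAt H (H x * Hbar x) x := by
  have h1 : HasDerivAt (fun y : ℝ => -y) (-1) x := (hasDerivAt_id x).neg
  have h2 : HasDerivAt (fun y : ℝ => Real.exp (-y)) (Real.exp (-x) * (-1)) x :=
    (Real.hasDerivAt_exp (-x)).comp x h1
  have h3 : HasDerivAt (fun y : ℝ => 1 + Real.exp (-y)) (Real.exp (-x) * (-1)) x :=
    h2.const_add 1
  have hne : (1 + Real.exp (-x)) ≠ 0 := by positivity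
  have h4 := h3.inv hne
  have : -(Real.exp (-x) * (-1)) / (1 + Real.exp (-x)) ^ 2 = H x * Hbar x := by
    rw [Hbar_eq']; unfold H
    field_simp
  rw [this] at h4
  have heq : (fun y => 1 + Real.exp (-y))⁻¹ = H := by
    funext y; simp only [Pi.inv_apply, H, one_div]
  rwa [heq] at h4

noncomputable def FH (s : ℝ) : ℝ := -Real.log (1 + Real.exp (-s))

lemma hasDerivAt_FH (x : ℝ) : HasDerivAt FH (Hbar x) x := by
  have h1 : HasDerivAt (fun y : ℝ => -y) (-1) x := (hasDerivAt_id x).neg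
  have h2 : HasDerivAt (fun y : ℝ => Real.exp (-y)) (Real.exp (-x) * (-1)) x :=
    (Real.hasDerivAt_exp (-x)).comp x h1
  have h3 : HasDerivAt (fun y : ℝ => 1 + Real.exp (-y)) (Real.exp (-x) * (-1)) x :=
    h2.const_add 1
  have hne : (1 + Real.exp (-x)) ≠ 0 := by positivity
  have h4 := (h3.log hne).neg
  have : -(Real.exp (-x) * (-1) / (1 + Real.exp (-x))) = Hbar x := by
    rw [Hbar_eq']; field_simp
  rwa [this] at h4

lemma tendsto_exp_neg : Tendsto (fun x : ℝ => Real.exp (-x)) atTop (nhds 0) :=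
  Real.tendsto_exp_atBot.comp tendsto_neg_atTop_atBot

lemma tendsto_H_atTop : Tendsto H atTop (nhds 1) := by
  have h : Tendsto (fun x : ℝ => 1 + Real.exp (-x)) atTop (nhds (1 + 0)) :=
    tendsto_const_nhds.add tendsto_exp_neg
  have h2 : Tendsto (fun x : ℝ => 1 / (1 + Real.exp (-x))) atTop (nhds (1 / (1 + 0))) :=
    tendsto_const_nhds.div h (by norm_num)
  have hH : H = fun x : ℝ => 1 / (1 + Real.exp (-x)) := rfl
  rw [hH]
  simpa using h2

lemma tendsto_FH_atTop : Tendsto FH atTop (nhds 0) := by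
  have h : Tendsto (fun x : ℝ => 1 + Real.exp (-x)) atTop (nhds (1 + 0)) :=
    tendsto_const_nhds.add tendsto_exp_neg
  have h2 := (h.log (by norm_num)).neg
  show Tendsto (fun x : ℝ => -Real.log (1 + Real.exp (-x))) atTop (nhds 0)
  simpa using h2

lemma int_Hbar_Ioi (y : ℝ) : ∫ s in Ioi y, Hbar s = Real.log (1 + Real.exp (-y)) := by
  have h := integral_Ioi_of_hasDerivAt_of_nonneg' (g := FH) (g' := Hbar) (a := y)
    (fun x _ => hasDerivAt_FH x) (fun x _ => Hbar_nonneg x) tendsto_FH_atTop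
  rw [h]
  unfold FH
  ring

lemma intOn_Hbar_Ioi (y : ℝ) : IntegrableOn Hbar (Ioi y) :=
  integrableOn_Ioi_deriv_of_nonneg' (fun x _ => hasDerivAt_FH x)
    (fun x _ => Hbar_nonneg x) tendsto_FH_atTop

lemma int_HHbar_Ioi (y : ℝ) : ∫ s in Ioi y, H s * Hbar s = 1 - H y := by
  exact integral_Ioi_of_hasDerivAt_of_nonneg' (g := H) (g' := fun s => H s * Hbar s) (a := y)
    (fun x _ => hasDerivAt_H x)
    (fun x _ => le_of_lt (mul_pos (H_pos x) (Hbar_pos x))) tendsto_H_atTop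

lemma intOn_HHbar_Ioi (y : ℝ) : IntegrableOn (fun s => H s * Hbar s) (Ioi y) :=
  integrableOn_Ioi_deriv_of_nonneg' (fun x _ => hasDerivAt_H x)
    (fun x _ => le_of_lt (mul_pos (H_pos x) (Hbar_pos x))) tendsto_H_atTop

lemma H_le_log (x : ℝ) : H x ≤ Real.log (1 + Real.exp x) := by
  have h1 : (0:ℝ) < 1 + Real.exp x := by positivity
  have h2 := Real.log_le_sub_one_of_pos (x := (1 + Real.exp x)⁻¹) (by positivity)
  rw [Real.log_inv] at h2
  have h3 : H x = 1 - (1 + Real.exp x)⁻¹ := by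
    have := Hbar_eq x
    unfold Hbar at this
    rw [one_div] at this
    linarith
  linarith

lemma H_cont : Continuous H := by
  unfold H
  apply Continuous.div continuous_const
  · fun_prop
  · intro x; positivity

lemma Hbar_cont : Continuous Hbar :=
  continuous_const.sub H_cont


lemma exp_neg_le_quad {u : ℝ} (hu : 0 ≤ u) : Real.exp (-u) ≤ 1 - u + u ^ 2 / 2 := by
  set f : ℝ → ℝ := fun v => 1 - v + v ^ 2 / 2 - Real.exp (-v) with hf
  have hderiv : ∀ v : ℝ, HasDerivAt f (-1 + v + Real.exp (-v)) v := by
    intro v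
    have h2 : HasDerivAt (fun y : ℝ => Real.exp (-y)) (Real.exp (-v) * (-1)) v :=
      (Real.hasDerivAt_exp (-v)).comp v ((hasDerivAt_id v).neg)
    have h3 : HasDerivAt (fun y : ℝ => 1 - y + y ^ 2 / 2) (0 - 1 + 2 * v / 2) v := by
      have := ((hasDerivAt_id v).const_sub 1).add
        (((hasDerivAt_id v).pow 2).div_const 2)
      simpa [Pi.add_def] using this
    have := h3.sub h2
    exact this.congr_deriv (by ring)
  have hmono : MonotoneOn f (Ici 0) := by
    apply monotoneOn_of_deriv_nonneg (convex_Ici 0)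
      (fun v _ => (hderiv v).continuousAt.continuousWithinAt)
      (fun v _ => (hderiv v).differentiableAt.differentiableWithinAt)
    intro v hv
    rw [(hderiv v).deriv]
    rw [interior_Ici] at hv
    have := Real.add_one_le_exp (-v)
    linarith
  have h0 : f 0 = 0 := by simp [hf]
  have := hmono (self_mem_Ici) hu hu
  rw [h0] at this
  simp only [hf] at this
  linarith

lemma exp_neg_ge_cubic {u : ℝ} (hu : 0 ≤ u) :
    1 - u + u ^ 2 / 2 - u ^ 3 / 6 ≤ Real.exp (-u) := by
  set f : ℝ → ℝ := fun v => Real.exp (-v) - (1 - v + v ^ 2 / 2 - v ^ 3 / 6) with hf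
  have hderiv : ∀ v : ℝ, HasDerivAt f (-Real.exp (-v) + (1 - v + v ^ 2 / 2)) v := by
    intro v
    have h2 : HasDerivAt (fun y : ℝ => Real.exp (-y)) (Real.exp (-v) * (-1)) v :=
      (Real.hasDerivAt_exp (-v)).comp v ((hasDerivAt_id v).neg)
    have h3 : HasDerivAt (fun y : ℝ => 1 - y + y ^ 2 / 2 - y ^ 3 / 6)
        (0 - 1 + 2 * v / 2 - 3 * v ^ 2 / 6) v := by
      have := (((hasDerivAt_id v).const_sub 1).add
        (((hasDerivAt_id v).pow 2).div_const 2)).sub (((hasDerivAt_id v).pow 3).div_const 6)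
      simpa [Pi.add_def, Pi.sub_def] using this
    have := h2.sub h3
    exact this.congr_deriv (by ring)
  have hmono : MonotoneOn f (Ici 0) := by
    apply monotoneOn_of_deriv_nonneg (convex_Ici 0)
      (fun v _ => (hderiv v).continuousAt.continuousWithinAt)
      (fun v _ => (hderiv v).differentiableAt.differentiableWithinAt)
    intro v hv
    rw [(hderiv v).deriv]
    rw [interior_Ici] at hv
    have := exp_neg_le_quad (le_of_lt hv)
    linarith
  have h0 : f 0 = 0 := by simp [hf]
  have := hmono (self_mem_Ici) hu hu
  rw [h0] at this
  simp only [hf] at this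
  linarith

lemma one_sub_exp_neg_le {t : ℝ} (h0 : 0 ≤ t) (h1 : t ≤ 1) :
    1 - Real.exp (-t) ≤ t - t ^ 2 / 3 := by
  have h2 := exp_neg_ge_cubic h0
  have h3 : t ^ 3 ≤ t ^ 2 := by nlinarith
  linarith

/-- The set 𝔉 of continuous, non-increasing functions `f : ℝ → [0,1]`
with `H̄(x)² ≤ f(x) ≤ H̄(x)` for all `x`. -/
def memF (f : ℝ → ℝ) : Prop :=
  (∀ x, f x ∈ Set.Icc (0:ℝ) 1) ∧ Continuous f ∧ Antitone f ∧
    ∀ x, Hbar x ^ 2 ≤ f x ∧ f x ≤ Hbar x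

/-- The operator `T(f)(x) := H̄(x)² · exp(∫_{-x}^∞ f(s) ds)`. -/
noncomputable def T (f : ℝ → ℝ) (x : ℝ) : ℝ :=
  Hbar x ^ 2 * Real.exp (∫ s in Set.Ioi (-x), f s)

/-- The only function `g ∈ 𝔉` with
`g(x) = H̄(x)² · exp(∫_{−x}^{∞} g(s) ds)` for all `x` is `g = H̄`. -/
theorem stmt15 (g : ℝ → ℝ) (hg : memF g)
    (hfix : ∀ x, g x = Hbar x ^ 2 * Real.exp (∫ s in Set.Ioi (-x), g s)) :
    g = Hbar := by
  obtain ⟨hg01, hgc, hganti, hgb⟩ := hg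
  have phi_cont : Continuous (fun s => Hbar s - g s) := Hbar_cont.sub hgc
  have phi_nonneg : ∀ s, 0 ≤ Hbar s - g s := fun s => sub_nonneg.2 (hgb s).2
  have phi_le_HHbar : ∀ s, Hbar s - g s ≤ H s * Hbar s := by
    intro s
    have h1 := (hgb s).1
    have h2 : H s = 1 - Hbar s := by rw [← one_sub_H s]; ring
    nlinarith [Hbar_pos s]
  have hg_nonneg : ∀ s, 0 ≤ g s := fun s => (hg01 s).1
  have hg_int : ∀ y, IntegrableOn g (Ioi y) := by
    intro y
    apply Integrable.mono' (intOn_Hbar_Ioi y) hgc.aestronglyMeasurable.restrict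
    filter_upwards with s
    rw [Real.norm_eq_abs, abs_of_nonneg (hg_nonneg s)]
    exact (hgb s).2
  have phi_int : ∀ y, IntegrableOn (fun s => Hbar s - g s) (Ioi y) :=
    fun y => (intOn_Hbar_Ioi y).sub (hg_int y)
  set r : ℝ → ℝ := fun x => ∫ s in Ioi (-x), (Hbar s - g s) with hrdef
  have hr_eq : ∀ x, r x = Real.log (1 + Real.exp x) - ∫ s in Ioi (-x), g s := by
    intro x
    rw [hrdef]
    simp only
    rw [integral_sub (intOn_Hbar_Ioi _) (hg_int _), int_Hbar_Ioi, neg_neg]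
  have hgr : ∀ x, g x = Hbar x * Real.exp (-(r x)) := by
    intro x
    have h1 : ∫ s in Ioi (-x), g s = Real.log (1 + Real.exp x) - r x := by
      have := hr_eq x; linarith
    rw [hfix x, h1, Real.exp_sub, Real.exp_log (by positivity)]
    rw [Hbar_eq, Real.exp_neg]
    have hne : (0:ℝ) < 1 + Real.exp x := by positivity
    have hne2 := Real.exp_pos (r x)
    field_simp
  have phi_eq : ∀ s, Hbar s - g s = Hbar s * (1 - Real.exp (-(r s))) := by
    intro s; rw [hgr s]; ring
  have hr_nonneg : ∀ x, 0 ≤ r x := fun x =>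
    setIntegral_nonneg measurableSet_Ioi (fun s _ => phi_nonneg s)
  have hr_le_H : ∀ x, r x ≤ H x := by
    intro x
    have h1 : r x ≤ ∫ s in Ioi (-x), H s * Hbar s :=
      integral_mono (phi_int _) (intOn_HHbar_Ioi _) (fun s => phi_le_HHbar s)
    rw [int_HHbar_Ioi, H_neg] at h1
    have h2 : 1 - Hbar x = H x := by rw [← one_sub_H x]; ring
    linarith
  have hr_le_one : ∀ x, r x ≤ 1 := fun x => (hr_le_H x).trans (H_le_one x)
  have hr_mono : Monotone r := by
    intro a b hab
    apply setIntegral_mono_set (phi_int (-b))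
    · filter_upwards with s using phi_nonneg s
    · exact HasSubset.Subset.eventuallyLE (Ioi_subset_Ioi (neg_le_neg hab))
  have hr_meas : Measurable r := hr_mono.measurable
  have hHr_int : ∀ y, IntegrableOn (fun s => Hbar s * r s) (Ioi y) := by
    intro y
    apply Integrable.mono' (intOn_HHbar_Ioi y)
      ((Hbar_cont.measurable.mul hr_meas).aestronglyMeasurable.restrict)
    filter_upwards with s
    simp only [Pi.mul_apply]
    rw [Real.norm_eq_abs, abs_of_nonneg (mul_nonneg (Hbar_nonneg s) (hr_nonneg s))]
    calc Hbar s * r s ≤ Hbar s * H s := by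
          exact mul_le_mul_of_nonneg_left (hr_le_H s) (Hbar_nonneg s)
      _ = H s * Hbar s := by ring
  have hHr2_int : ∀ y, IntegrableOn (fun s => Hbar s * r s ^ 2) (Ioi y) := by
    intro y
    apply Integrable.mono' (intOn_HHbar_Ioi y)
      ((Hbar_cont.measurable.mul (hr_meas.pow_const 2)).aestronglyMeasurable.restrict)
    filter_upwards with s
    simp only [Pi.mul_apply]
    rw [Real.norm_eq_abs, abs_of_nonneg (mul_nonneg (Hbar_nonneg s) (sq_nonneg (r s)))]
    have : r s ^ 2 ≤ H s := by nlinarith [hr_nonneg s, hr_le_one s, hr_le_H s]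
    calc Hbar s * r s ^ 2 ≤ Hbar s * H s :=
          mul_le_mul_of_nonneg_left this (Hbar_nonneg s)
      _ = H s * Hbar s := by ring
  -- the supremum of r/H
  set Q : Set ℝ := Set.range (fun x => r x / H x) with hQdef
  have hQne : Q.Nonempty := ⟨r 0 / H 0, 0, rfl⟩
  have hQbdd : BddAbove Q := by
    refine ⟨1, ?_⟩
    rintro q ⟨x, rfl⟩
    exact div_le_one_of_le₀ (hr_le_H x) (le_of_lt (H_pos x))
  set c : ℝ := sSup Q with hcdef
  have hc_ub : ∀ x, r x ≤ c * H x := by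
    intro x
    have h1 : r x / H x ≤ c := le_csSup hQbdd ⟨x, rfl⟩
    rwa [div_le_iff₀ (H_pos x)] at h1
  -- key lower bound on the quadratic integral
  have key_lower : ∀ x, r 0 ^ 2 / 2 * H x ≤ ∫ s in Ioi (-x), Hbar s * r s ^ 2 := by
    intro x
    have r2mono : ∀ s : ℝ, 0 ≤ s → r 0 ^ 2 ≤ r s ^ 2 := by
      intro s hs
      have := hr_mono hs
      nlinarith [hr_nonneg 0]
    rcases le_total x 0 with hx | hx
    · -- here -x ≥ 0, so r s ≥ r 0 on Ioi (-x)
      have h1 : ∫ s in Ioi (-x), r 0 ^ 2 * Hbar s ≤ ∫ s in Ioi (-x), Hbar s * r s ^ 2 := by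
        apply setIntegral_mono_on ((intOn_Hbar_Ioi (-x)).const_mul _) (hHr2_int (-x))
          measurableSet_Ioi
        intro s hs
        have hs0 : (0:ℝ) ≤ s := le_trans (by linarith) (le_of_lt hs)
        have := r2mono s hs0
        nlinarith [Hbar_nonneg s]
      rw [integral_const_mul, int_Hbar_Ioi, neg_neg] at h1
      have h2 : H x ≤ Real.log (1 + Real.exp x) := H_le_log x
      nlinarith [sq_nonneg (r 0), H_pos x]
    · -- here 0 ≤ x, so Ioi (-x) ⊇ Ioi 0
      have h0 : ∫ s in Ioi (0:ℝ), Hbar s * r s ^ 2 ≤ ∫ s in Ioi (-x), Hbar s * r s ^ 2 := by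
        apply setIntegral_mono_set (hHr2_int (-x))
        · filter_upwards with s
          exact mul_nonneg (Hbar_nonneg s) (sq_nonneg (r s))
        · exact HasSubset.Subset.eventuallyLE (Ioi_subset_Ioi (by linarith))
      have h1 : ∫ s in Ioi (0:ℝ), r 0 ^ 2 * Hbar s ≤ ∫ s in Ioi (0:ℝ), Hbar s * r s ^ 2 := by
        apply setIntegral_mono_on ((intOn_Hbar_Ioi 0).const_mul _) (hHr2_int 0)
          measurableSet_Ioi
        intro s hs
        have := r2mono s (le_of_lt hs)
        nlinarith [Hbar_nonneg s]
      rw [integral_const_mul, int_Hbar_Ioi, neg_zero] at h1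
      have hlog2 : (1:ℝ) / 2 ≤ Real.log (1 + Real.exp 0) := by
        rw [Real.exp_zero]
        norm_num
        nlinarith [Real.log_two_gt_d9]
      have hH1 := H_le_one x
      nlinarith [sq_nonneg (r 0)]
  -- main estimate
  have main : ∀ x, r x ≤ (c - r 0 ^ 2 / 6) * H x := by
    intro x
    have p1 : ∀ s, Hbar s - g s ≤ Hbar s * r s - Hbar s * r s ^ 2 / 3 := by
      intro s
      rw [phi_eq s]
      have h := one_sub_exp_neg_le (hr_nonneg s) (hr_le_one s)
      nlinarith [Hbar_nonneg s]
    have p2 : r x ≤ ∫ s in Ioi (-x), (Hbar s * r s - Hbar s * r s ^ 2 / 3) :=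
      integral_mono (phi_int _) ((hHr_int _).sub ((hHr2_int _).div_const 3)) p1
    rw [integral_sub (hHr_int _) ((hHr2_int _).div_const 3)] at p2
    have p3 : ∫ s in Ioi (-x), Hbar s * r s ≤ c * H x := by
      have h1 : ∫ s in Ioi (-x), Hbar s * r s ≤ ∫ s in Ioi (-x), c * (H s * Hbar s) := by
        apply integral_mono (hHr_int _) ((intOn_HHbar_Ioi _).const_mul _)
        intro s
        show Hbar s * r s ≤ c * (H s * Hbar s)
        have := hc_ub s
        nlinarith [Hbar_nonneg s]
      rw [integral_const_mul, int_HHbar_Ioi, H_neg] at h1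
      have h2 : 1 - Hbar x = H x := by rw [← one_sub_H x]; ring
      rw [h2] at h1
      exact h1
    have p4 : ∫ s in Ioi (-x), Hbar s * r s ^ 2 / 3
        = (∫ s in Ioi (-x), Hbar s * r s ^ 2) / 3 := integral_div _ _
    have p5 := key_lower x
    rw [p4] at p2
    nlinarith
  -- conclude r 0 = 0
  have hr0 : r 0 = 0 := by
    have hub : c ≤ c - r 0 ^ 2 / 6 := by
      apply csSup_le hQne
      rintro q ⟨x, rfl⟩
      rw [div_le_iff₀ (H_pos x)]
      exact main x
    nlinarith [hr_nonneg 0, sq_nonneg (r 0)]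
  -- φ vanishes a.e. on Ioi 0
  have hae : (fun s => Hbar s - g s) =ᵐ[volume.restrict (Ioi (0:ℝ))] 0 := by
    rw [← setIntegral_eq_zero_iff_of_nonneg_ae]
    · have : r 0 = ∫ s in Ioi (-(0:ℝ)), (Hbar s - g s) := rfl
      rw [neg_zero] at this
      rw [← this, hr0]
    · filter_upwards with s using phi_nonneg s
    · exact phi_int 0
  -- φ vanishes on Iic 0
  have hIic : ∀ x ≤ (0:ℝ), Hbar x - g x = 0 := by
    intro x hx
    have h1 : r x ≤ r 0 := hr_mono hx
    have h2 : r x = 0 := le_antisymm (by rw [← hr0]; exact h1) (hr_nonneg x)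
    rw [phi_eq x, h2]
    simp
  -- combine to φ =ᵐ 0 everywhere
  have hae2 : (fun s => Hbar s - g s) =ᵐ[volume] 0 := by
    have h1 := (ae_restrict_iff' measurableSet_Ioi).1 hae
    filter_upwards [h1] with s hs
    rcases le_or_gt s 0 with h | h
    · exact hIic s h
    · exact hs h
  have heq : (fun s => Hbar s - g s) = 0 :=
    (Continuous.ae_eq_iff_eq volume phi_cont continuous_const).1 hae2
  funext x
  have := congrFun heq x
  simp only [Pi.zero_apply] at this
  linarith
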